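/- arXiv:2110.04882 — 5 statements merged into one kernel-verified Lean document; each statement's English description precedes it below -/
import Mathlib

section
/- Let G : ℝ^m → ℝ^n be linear, W : ℝ^n → ℝ^{n−k} and A : ℝ^n → ℝ^ℓ be linear with A and W jointly surjective onto ℝ^ℓ × ℝ^{n−k} restricted appropriately. Suppose (MFCQ): W∘G is surjective and there exists x̂ with W G x̂ = 0 and A G x̂ < 0 componentwise. Then (ZKRCQ) holds: Image(G) − {y ∈ ℝ^n : W y = 0, A y ≤ 0} = ℝ^n. -/
open Filter Topology

theorem stmt_6 {m n l k : ℕ}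
    (G : (Fin m → ℝ) →ₗ[ℝ] (Fin n → ℝ))
    (W : (Fin n → ℝ) →ₗ[ℝ] (Fin (n - k) → ℝ))
    (A : (Fin n → ℝ) →ₗ[ℝ] (Fin l → ℝ))
    (hWG : Function.Surjective (fun x => W (G x)))
    (hx : ∃ xhat : Fin m → ℝ, W (G xhat) = 0 ∧ ∀ i, A (G xhat) i < 0) :
    ∀ y : Fin n → ℝ, ∃ (x : Fin m → ℝ) (c : Fin n → ℝ),
      W c = 0 ∧ (∀ i, A c i ≤ 0) ∧ G x - c = y := by
  obtain ⟨xhat, hW0, hA⟩ := hx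
  intro y
  obtain ⟨x0, hx0⟩ := hWG (W y)
  simp only at hx0
  set d : Fin l → ℝ := fun i => A (G x0) i - A y i with hd
  set t : ℝ := ((Finset.univ.sup (fun i => ⌈d i / (-(A (G xhat) i))⌉₊) : ℕ) : ℝ) with ht
  refine ⟨x0 + t • xhat, G (x0 + t • xhat) - y, ?_, ?_, ?_⟩
  · simp [map_add, map_sub, map_smul, hx0, hW0]
  · intro i
    have ha := hA i
    have hna : 0 < -(A (G xhat) i) := by linarith
    have h1 : d i / (-(A (G xhat) i)) ≤ t := by
      refine le_trans (Nat.le_ceil _) ?_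
      rw [ht]; exact_mod_cast Finset.le_sup (f := fun i => ⌈d i / (-(A (G xhat) i))⌉₊) (Finset.mem_univ i)
    have h2 : d i ≤ t * (-(A (G xhat) i)) := (div_le_iff₀ hna).1 h1
    have hce : A (G (x0 + t • xhat) - y) i = d i + t * A (G xhat) i := by
      simp [map_add, map_sub, map_smul, hd]
      ring
    rw [hce]
    nlinarith
  · abel
end

section
/- Let f : ℝ^m → ℝ and G : ℝ^m → ℝ^n be linear maps, and K ⊆ ℝ^n a polyhedral convex cone K = {y : A y ≤ 0, W y = 0} with A, W linear. Suppose f(v) ≥ 0 for all v with G v ∈ K, and suppose Image(G) − K = ℝ^n. Then there exists μ ∈ (ℝ^n)* with f + μ∘G = 0 and μ ∈ K° (the polar cone of K). -/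
open Filter Topology Pointwise

theorem stmt_9 {m n l k : ℕ}
    (f : (Fin m → ℝ) →ₗ[ℝ] ℝ)
    (G : (Fin m → ℝ) →ₗ[ℝ] (Fin n → ℝ))
    (A : (Fin n → ℝ) →ₗ[ℝ] (Fin l → ℝ))
    (W : (Fin n → ℝ) →ₗ[ℝ] (Fin (n - k) → ℝ))
    (K : Set (Fin n → ℝ)) (hK : K = {y | (∀ i, A y i ≤ 0) ∧ W y = 0})
    (hpos : ∀ v, G v ∈ K → 0 ≤ f v)
    (hZKR : ∀ y : Fin n → ℝ, ∃ (x : Fin m → ℝ) (c : Fin n → ℝ), c ∈ K ∧ G x - c = y) :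
    ∃ μ : (Fin n → ℝ) →ₗ[ℝ] ℝ, (∀ v, f v + μ (G v) = 0) ∧ ∀ y ∈ K, μ y ≤ 0 := by
  -- basic cone properties of K
  have hK0 : (0 : Fin n → ℝ) ∈ K := by
    rw [hK]; exact ⟨fun i => by simp, by simp⟩
  have hKadd : ∀ y z, y ∈ K → z ∈ K → y + z ∈ K := by
    rw [hK]; rintro y z ⟨hy1, hy2⟩ ⟨hz1, hz2⟩
    refine ⟨fun i => ?_, by rw [map_add, hy2, hz2, add_zero]⟩
    rw [map_add]
    exact add_nonpos (hy1 i) (hz1 i)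
  have hKsmul : ∀ (c : ℝ), 0 < c → ∀ y ∈ K, c • y ∈ K := by
    rw [hK]; rintro c hc y ⟨hy1, hy2⟩
    refine ⟨fun i => ?_, by rw [map_smul, hy2, smul_zero]⟩
    rw [map_smul, Pi.smul_apply, smul_eq_mul]
    exact mul_nonpos_of_nonneg_of_nonpos hc.le (hy1 i)
  -- the set of values of f over representations of y
  set S : (Fin n → ℝ) → Set ℝ := fun y => {t | ∃ x, G x - y ∈ K ∧ f x = t} with hS
  have hSne : ∀ y, (S y).Nonempty := by
    intro y
    obtain ⟨x, c, hc, hxc⟩ := hZKR y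
    have : G x - y = c := by rw [← hxc]; abel
    exact ⟨f x, x, this ▸ hc, rfl⟩
  have hSbdd : ∀ y, BddBelow (S y) := by
    intro y
    obtain ⟨x', c, hc, hxc⟩ := hZKR (-y)
    have hx' : G x' + y = c := by
      rw [sub_eq_iff_eq_add] at hxc
      rw [hxc]; abel
    refine ⟨-f x', ?_⟩
    rintro t ⟨x, hx, rfl⟩
    have hsum : G (x + x') ∈ K := by
      have := hKadd _ _ hx (hx' ▸ hc)
      have heq : G x - y + (G x' + y) = G (x + x') := by rw [map_add]; abel
      rwa [heq] at this
    have := hpos _ hsum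
    rw [map_add] at this
    linarith
  set N : (Fin n → ℝ) → ℝ := fun y => sInf (S y) with hN
  have key1 : ∀ y x, G x - y ∈ K → N y ≤ f x := fun y x hx =>
    csInf_le (hSbdd y) ⟨x, hx, rfl⟩
  have key2 : ∀ y (b : ℝ), (∀ x, G x - y ∈ K → b ≤ f x) → b ≤ N y := by
    intro y b hb
    refine le_csInf (hSne y) ?_
    rintro t ⟨x, hx, rfl⟩
    exact hb x hx
  -- sublinearity of N
  have N_add : ∀ y z, N (y + z) ≤ N y + N z := by
    intro y z
    rw [← sub_le_iff_le_add']
    refine key2 z _ (fun x' hx' => ?_)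
    have hle : N (y + z) - f x' ≤ N y := by
      refine key2 y _ (fun x hx => ?_)
      have hmem : G (x + x') - (y + z) ∈ K := by
        have := hKadd _ _ hx hx'
        have heq : G x - y + (G x' - z) = G (x + x') - (y + z) := by rw [map_add]; abel
        rwa [heq] at this
      have := key1 _ _ hmem
      rw [map_add] at this
      linarith
    linarith
  have N_hom : ∀ c : ℝ, 0 < c → ∀ y, N (c • y) = c * N y := by
    intro c hc y
    have hSeq : S (c • y) = c • S y := by
      ext t
      constructor
      · rintro ⟨x, hx, rfl⟩
        refine ⟨f (c⁻¹ • x), ⟨c⁻¹ • x, ?_, rfl⟩, ?_⟩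
        · have := hKsmul c⁻¹ (by positivity) _ hx
          have heq : c⁻¹ • (G x - c • y) = G (c⁻¹ • x) - y := by
            rw [map_smul, smul_sub, smul_smul, inv_mul_cancel₀ hc.ne', one_smul]
          rwa [heq] at this
        · show c • f (c⁻¹ • x) = f x
          rw [map_smul, smul_eq_mul, smul_eq_mul, ← mul_assoc, mul_inv_cancel₀ hc.ne', one_mul]
      · rintro ⟨t', ⟨x, hx, rfl⟩, rfl⟩
        refine ⟨c • x, ?_, by show f (c • x) = c • f x; rw [map_smul]⟩
        have := hKsmul c hc _ hx
        have heq : c • (G x - y) = G (c • x) - c • y := by rw [map_smul, smul_sub]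
        rwa [heq] at this
    rw [hN]
    simp only [hSeq]
    rw [Real.sInf_smul_of_nonneg hc.le, smul_eq_mul]
  -- Hahn-Banach extension of the zero map on the trivial subspace
  obtain ⟨g, -, hg⟩ :=
    exists_extension_of_le_sublinear
      ((0 : (Fin n → ℝ) →ₗ[ℝ] ℝ).toPMap (⊥ : Submodule ℝ (Fin n → ℝ))) N N_hom N_add
      (by
        intro x
        change (0 : ℝ) ≤ N (x : Fin n → ℝ)
        have hx0 : (x : Fin n → ℝ) = 0 := (Submodule.mem_bot ℝ).mp x.2
        rw [hx0]
        refine key2 0 0 (fun x hx => ?_)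
        rw [sub_zero] at hx
        exact hpos x hx)
  refine ⟨-g, ?_, ?_⟩
  · intro v
    have h1 : g (G v) ≤ f v := by
      have : G v - G v ∈ K := by rw [sub_self]; exact hK0
      exact le_trans (hg (G v)) (key1 _ _ this)
    have h2 : g (-G v) ≤ f (-v) := by
      have : G (-v) - -G v ∈ K := by rw [map_neg, neg_sub_neg, sub_self]; exact hK0
      exact le_trans (hg (-G v)) (key1 _ _ this)
    simp only [map_neg] at h2
    simp only [LinearMap.neg_apply]
    linarith
  · intro y hy
    have : G 0 - -y ∈ K := by rw [map_zero, zero_sub, neg_neg]; exact hy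
    have h := le_trans (hg (-y)) (key1 _ _ this)
    rw [map_zero, map_neg] at h
    simp only [LinearMap.neg_apply]
    linarith
end

section
/- Let G : ℝ^m → ℝ^n be linear, K ⊆ ℝ^n a closed convex cone with Image(G) − K = ℝ^n, and let c ∈ (ℝ^m)*. Then the set Λ = {μ ∈ (ℝ^n)* : c + μ∘G = 0 and μ ∈ K°} is compact. -/
open Filter Topology

theorem stmt_10 {m n : ℕ}
    (G : (Fin m → ℝ) →L[ℝ] (Fin n → ℝ))
    (K : Set (Fin n → ℝ)) (hclosed : IsClosed K) (hconv : Convex ℝ K)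
    (hcone : ∀ (a : ℝ), 0 < a → ∀ y ∈ K, a • y ∈ K)
    (hZKR : ∀ y : Fin n → ℝ, ∃ (x : Fin m → ℝ) (c : Fin n → ℝ), c ∈ K ∧ G x - c = y)
    (c : (Fin m → ℝ) →L[ℝ] ℝ) :
    IsCompact {μ : (Fin n → ℝ) →L[ℝ] ℝ |
      (∀ v, c v + μ (G v) = 0) ∧ ∀ y ∈ K, μ y ≤ 0} := by
  classical
  set S := {μ : (Fin n → ℝ) →L[ℝ] ℝ |
      (∀ v, c v + μ (G v) = 0) ∧ ∀ y ∈ K, μ y ≤ 0} with hSdef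
  choose x k hk hGx using hZKR
  have hlow : ∀ μ ∈ S, ∀ y : Fin n → ℝ, -(c (x y)) ≤ μ y := by
    rintro μ ⟨h1, h2⟩ y
    have hμ : μ y = μ (G (x y)) - μ (k y) := by
      conv_lhs => rw [← hGx y]
      simp [map_sub]
    have h3 := h1 (x y)
    have h4 : μ (k y) ≤ 0 := h2 _ (hk y)
    linarith [hμ]
  have hbnd : ∀ μ ∈ S, ∀ y, |μ y| ≤ max |c (x y)| |c (x (-y))| := by
    intro μ hμ y
    have l1 := hlow μ hμ y
    have l2 := hlow μ hμ (-y)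
    rw [map_neg] at l2
    have a1 : c (x y) ≤ |c (x y)| := le_abs_self _
    have a2 : c (x (-y)) ≤ |c (x (-y))| := le_abs_self _
    have m1 : |c (x y)| ≤ max |c (x y)| |c (x (-y))| := le_max_left _ _
    have m2 : |c (x (-y))| ≤ max |c (x y)| |c (x (-y))| := le_max_right _ _
    rw [abs_le]
    constructor <;> linarith
  set C : ℝ := ∑ i : Fin n, max |c (x (Pi.single i 1))| |c (x (-(Pi.single i 1)))| with hCdef
  have hC0 : 0 ≤ C := Finset.sum_nonneg fun i _ => le_max_of_le_left (abs_nonneg _)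
  have hnorm : ∀ μ ∈ S, ‖μ‖ ≤ C := by
    intro μ hμ
    refine ContinuousLinearMap.opNorm_le_bound μ hC0 fun y => ?_
    have hy : μ y = ∑ i : Fin n, y i * μ (Pi.single i 1) := by
      conv_lhs => rw [pi_eq_sum_univ y]
      simp only [map_sum, map_smul, smul_eq_mul]
      refine Finset.sum_congr rfl fun i _ => ?_
      congr 1
      congr 1
      ext j
      simp [Pi.single_apply, eq_comm]
    rw [hy, Real.norm_eq_abs]
    calc |∑ i : Fin n, y i * μ (Pi.single i 1)|
        ≤ ∑ i : Fin n, |y i * μ (Pi.single i 1)| := Finset.abs_sum_le_sum_abs _ _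
      _ ≤ ∑ i : Fin n, ‖y‖ * max |c (x (Pi.single i 1))| |c (x (-(Pi.single i 1)))| := by
          refine Finset.sum_le_sum fun i _ => ?_
          rw [abs_mul]
          have hyi : |y i| ≤ ‖y‖ := by
            have := norm_le_pi_norm y i
            simpa [Real.norm_eq_abs] using this
          exact mul_le_mul hyi (hbnd μ hμ _) (abs_nonneg _) (norm_nonneg _)
      _ = C * ‖y‖ := by rw [← Finset.mul_sum, mul_comm]
  have hbdd : Bornology.IsBounded S := by
    rw [Metric.isBounded_iff_subset_closedBall 0]
    exact ⟨C, fun μ hμ => by simpa [Metric.mem_closedBall, dist_zero_right] using hnorm μ hμ⟩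
  have hcl : IsClosed S := by
    have hrw : S = (⋂ v, {μ : (Fin n → ℝ) →L[ℝ] ℝ | c v + μ (G v) = 0}) ∩
        ⋂ y ∈ K, {μ : (Fin n → ℝ) →L[ℝ] ℝ | μ y ≤ 0} := by
      ext μ
      simp [hSdef, Set.mem_iInter]
    rw [hrw]
    refine IsClosed.inter (isClosed_iInter fun v => ?_)
      (isClosed_iInter fun y => isClosed_iInter fun hy => ?_)
    · exact isClosed_eq (continuous_const.add
        (ContinuousLinearMap.apply ℝ ℝ (G v)).continuous) continuous_const
    · exact isClosed_le (ContinuousLinearMap.apply ℝ ℝ y).continuous continuous_const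
  exact Metric.isCompact_of_isClosed_isBounded hcl hbdd
end

section
/- Let K = {v ∈ ℝ^n : A_I v ≤ 0, A_E v = 0} be a polyhedral cone with linear maps A_I : ℝ^n → ℝ^{n_I}, A_E : ℝ^n → ℝ^{n_E}, and let Φ : U → V be a diffeomorphism between neighborhoods U, V of 0 with Φ(0) = 0 and Φ'(0) = id, mapping K ∩ U bijectively onto K ∩ V. Fix a row a_j of A_I and let K_j = {v ∈ K : a_j v = 0}. Then there exist neighborhoods Ũ, Ṽ of 0 such that Φ maps K_j ∩ Ũ bijectively onto K_j ∩ Ṽ. -/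
set_option maxHeartbeats 1000000
open Filter Topology Set

theorem key {n nI nE : ℕ}
    (AI : (EuclideanSpace ℝ (Fin n)) →ₗ[ℝ] (Fin nI → ℝ))
    (AE : (EuclideanSpace ℝ (Fin n)) →ₗ[ℝ] (Fin nE → ℝ))
    (K : Set (EuclideanSpace ℝ (Fin n)))
    (hK : K = {v | (∀ i, AI v i ≤ 0) ∧ AE v = 0})
    (U V : Set (EuclideanSpace ℝ (Fin n))) (hUopen : IsOpen U) (hVopen : IsOpen V)
    (hU0 : (0 : EuclideanSpace ℝ (Fin n)) ∈ U) (hV0 : (0 : EuclideanSpace ℝ (Fin n)) ∈ V)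
    (φ ψ : EuclideanSpace ℝ (Fin n) → EuclideanSpace ℝ (Fin n))
    (hφd : ContDiffOn ℝ 1 φ U) (hψd : ContDiffOn ℝ 1 ψ V)
    (hφK : Set.MapsTo φ (K ∩ U) (K ∩ V))
    (hψK : Set.MapsTo ψ (K ∩ V) K)
    (hinv : ∀ x ∈ U, ψ (φ x) = x)
    (hφ0 : φ 0 = 0)
    (hψid : fderiv ℝ ψ 0 = ContinuousLinearMap.id ℝ _)
    (j : Fin nI) :
    ∀ᶠ x in 𝓝 (0 : EuclideanSpace ℝ (Fin n)),
      (x ∈ K ∧ AI x j = 0 ∧ x ∈ U) → AI (φ x) j = 0 := by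
  classical
  by_contra hcon
  rw [Filter.not_eventually] at hcon
  -- extract a bad sequence tending to 0
  have hseq : ∀ k : ℕ, ∃ x : EuclideanSpace ℝ (Fin n),
      ‖x‖ < ((k : ℝ) + 1)⁻¹ ∧ x ∈ K ∧ AI x j = 0 ∧ x ∈ U ∧ AI (φ x) j ≠ 0 := by
    intro k
    have hball : Metric.ball (0 : EuclideanSpace ℝ (Fin n)) ((k : ℝ) + 1)⁻¹ ∈
        𝓝 (0 : EuclideanSpace ℝ (Fin n)) :=
      Metric.ball_mem_nhds _ (by positivity)
    obtain ⟨x, hx1, hx2⟩ := Filter.frequently_iff.mp hcon hball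
    push_neg at hx2
    obtain ⟨⟨h1, h2, h3⟩, h4⟩ := hx2
    exact ⟨x, by simpa using hx1, h1, h2, h3, h4⟩
  choose x hxnorm hxK hxj hxU hxbad using hseq
  have hx0 : Tendsto x atTop (𝓝 0) := by
    apply squeeze_zero_norm (fun k => (hxnorm k).le)
    have := tendsto_one_div_add_atTop_nhds_zero_nat (𝕜 := ℝ)
    simpa [one_div] using this
  set q : ℕ → EuclideanSpace ℝ (Fin n) := fun k => φ (x k) with hqdef
  have hqKV : ∀ k, q k ∈ K ∩ V := fun k => hφK ⟨hxK k, hxU k⟩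
  have hqneg : ∀ k, AI (q k) j < 0 := by
    intro k
    have h1 : AI (q k) j ≤ 0 := by
      have := (hqKV k).1
      rw [hK] at this
      exact this.1 j
    exact lt_of_le_of_ne h1 (hxbad k)
  have hq0 : Tendsto q atTop (𝓝 0) := by
    have hc : ContinuousAt φ 0 :=
      (hφd.continuousOn.continuousAt (hUopen.mem_nhds hU0))
    have := hc.tendsto.comp hx0
    rwa [hφ0] at this
  -- derivative of ψ tends to id along q
  have hψdiff : ∀ y ∈ V, DifferentiableAt ℝ ψ y := fun y hy =>
    (hψd.contDiffAt (hVopen.mem_nhds hy)).differentiableAt one_ne_zero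
  have hL : Tendsto (fun k => fderiv ℝ ψ (q k)) atTop
      (𝓝 (ContinuousLinearMap.id ℝ (EuclideanSpace ℝ (Fin n)))) := by
    have hfc : ContinuousAt (fderiv ℝ ψ) 0 :=
      (hψd.continuousOn_fderiv_of_isOpen hVopen le_rfl).continuousAt (hVopen.mem_nhds hV0)
    have := hfc.tendsto.comp hq0
    rwa [hψid] at this
  -- pigeonhole on active sets
  obtain ⟨B, hB⟩ := Finite.exists_infinite_fiber
    (fun k => (Finset.univ.filter (fun ℓ => AI (q k) ℓ = 0) : Finset (Fin nI)))
  have hSinf : {k | (Finset.univ.filter (fun ℓ => AI (q k) ℓ = 0) : Finset (Fin nI)) = B}.Infinite := by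
    rw [← Set.infinite_coe_iff]
    exact hB
  set S := {k | (Finset.univ.filter (fun ℓ => AI (q k) ℓ = 0) : Finset (Fin nI)) = B} with hSdef
  have hmemB : ∀ k ∈ S, ∀ ℓ : Fin nI, (ℓ ∈ B ↔ AI (q k) ℓ = 0) := by
    intro k hk ℓ
    rw [← hk]
    simp
  obtain ⟨n₀, hn₀⟩ := hSinf.nonempty
  set v : EuclideanSpace ℝ (Fin n) := -(q n₀) with hvdef
  -- key derivative bound at each m ∈ S
  have hkey : ∀ m ∈ S, AI (fderiv ℝ ψ (q m) v) j ≤ 0 := by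
    intro m hm
    -- the segment stays in K ∩ V for small positive t
    have hmemKV : ∀ᶠ t in 𝓝[>] (0:ℝ), q m + t • v ∈ K ∩ V := by
      have hcont : Tendsto (fun t : ℝ => q m + t • v) (𝓝[>] 0) (𝓝 (q m)) := by
        have h1 : Tendsto (fun t : ℝ => q m + t • v) (𝓝 0) (𝓝 (q m)) := by
          have : Continuous (fun t : ℝ => q m + t • v) :=
            continuous_const.add (continuous_id.smul continuous_const)
          have h2 := this.tendsto 0
          simpa using h2
        exact h1.mono_left nhdsWithin_le_nhds
      have hV' : ∀ᶠ t in 𝓝[>] (0:ℝ), q m + t • v ∈ V :=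
        hcont.eventually (hVopen.eventually_mem (hqKV m).2)
      have hAE : ∀ t : ℝ, AE (q m + t • v) = 0 := by
        intro t
        have h1 : AE (q m) = 0 := by have := (hqKV m).1; rw [hK] at this; exact this.2
        have h2 : AE (q n₀) = 0 := by have := (hqKV n₀).1; rw [hK] at this; exact this.2
        simp [hvdef, map_add, map_smul, map_neg, h1, h2]
      have hAI : ∀ᶠ t in 𝓝[>] (0:ℝ), ∀ ℓ, AI (q m + t • v) ℓ ≤ 0 := by
        rw [eventually_all]
        intro ℓ
        have hexp : ∀ t : ℝ, AI (q m + t • v) ℓ = AI (q m) ℓ - t * AI (q n₀) ℓ := by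
          intro t
          simp [hvdef, map_add, map_smul, map_neg, sub_eq_add_neg, mul_comm]
        by_cases hc : ℓ ∈ B
        · have h1 : AI (q m) ℓ = 0 := (hmemB m hm ℓ).mp hc
          have h2 : AI (q n₀) ℓ = 0 := (hmemB n₀ hn₀ ℓ).mp hc
          filter_upwards with t
          rw [hexp, h1, h2]
          simp
        · have h1 : AI (q m) ℓ < 0 := by
            have hle : AI (q m) ℓ ≤ 0 := by
              have := (hqKV m).1; rw [hK] at this; exact this.1 ℓ
            refine lt_of_le_of_ne hle ?_
            intro he
            exact hc ((hmemB m hm ℓ).mpr he)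
          have hten : Tendsto (fun t : ℝ => AI (q m) ℓ - t * AI (q n₀) ℓ) (𝓝[>] 0)
              (𝓝 (AI (q m) ℓ)) := by
            have : Continuous (fun t : ℝ => AI (q m) ℓ - t * AI (q n₀) ℓ) :=
              continuous_const.sub (continuous_id.mul continuous_const)
            have h2 := this.tendsto 0
            simp only [zero_mul, sub_zero] at h2
            exact h2.mono_left nhdsWithin_le_nhds
          have := hten.eventually_lt_const h1
          filter_upwards [this] with t ht
          rw [hexp]; exact ht.le
      filter_upwards [hV', hAI] with t h1 h2
      refine ⟨?_, h1⟩
      rw [hK]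
      exact ⟨h2, hAE t⟩
    -- the curve t ↦ ψ (q m + t • v) has derivative (fderiv ψ (q m)) v at 0
    have hcurve : HasDerivAt (fun t : ℝ => ψ (q m + t • v)) (fderiv ℝ ψ (q m) v) 0 := by
      have hinner : HasDerivAt (fun t : ℝ => q m + t • v) v 0 := by
        have h1 : HasDerivAt (fun t : ℝ => t • v) ((1:ℝ) • v) 0 :=
          (hasDerivAt_id 0).smul_const v
        have h2 := h1.const_add (q m)
        simpa using h2
      have hψF : HasFDerivAt ψ (fderiv ℝ ψ (q m)) ((fun t : ℝ => q m + t • v) 0) := by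
        have : ((fun t : ℝ => q m + t • v) 0) = q m := by simp
        rw [this]
        exact (hψdiff (q m) (hqKV m).2).hasFDerivAt
      exact hψF.comp_hasDerivAt 0 hinner
    -- compose with the continuous linear functional y ↦ AI y j
    set π : (EuclideanSpace ℝ (Fin n)) →L[ℝ] ℝ :=
      (ContinuousLinearMap.proj j).comp (LinearMap.toContinuousLinearMap AI) with hπdef
    have hπapp : ∀ y, π y = AI y j := by intro y; simp [hπdef]
    have hh : HasDerivAt (fun t : ℝ => AI (ψ (q m + t • v)) j)
        (AI (fderiv ℝ ψ (q m) v) j) 0 := by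
      have := (π.hasFDerivAt).comp_hasDerivAt 0 hcurve
      simp only [Function.comp_def, hπapp] at this
      exact this
    -- the function is ≤ 0 for small positive t and 0 at 0, so derivative ≤ 0
    have hf0 : AI (ψ (q m + (0:ℝ) • v)) j = 0 := by
      have : q m + (0:ℝ) • v = q m := by simp
      rw [this, hqdef]
      simp only []
      rw [hinv (x m) (hxU m)]
      exact hxj m
    have hslope : Tendsto (slope (fun t : ℝ => AI (ψ (q m + t • v)) j) 0) (𝓝[>] 0)
        (𝓝 (AI (fderiv ℝ ψ (q m) v) j)) := by
      have := hasDerivAt_iff_tendsto_slope.mp hh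
      exact this.mono_left (nhdsWithin_mono 0 (fun t ht => ne_of_gt ht))
    have hslope_le : ∀ᶠ t in 𝓝[>] (0:ℝ),
        slope (fun t : ℝ => AI (ψ (q m + t • v)) j) 0 t ≤ 0 := by
      filter_upwards [hmemKV, self_mem_nhdsWithin] with t hKV ht
      have hft : AI (ψ (q m + t • v)) j ≤ 0 := by
        have := hψK hKV
        rw [hK] at this
        exact this.1 j
      have hval : slope (fun t : ℝ => AI (ψ (q m + t • v)) j) 0 t
          = (AI (ψ (q m + t • v)) j) / t := by
        rw [slope_def_field]
        have h0 : AI (ψ (q m)) j = 0 := by simpa using hf0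
        simp [h0]
      rw [hval]
      exact div_nonpos_of_nonpos_of_nonneg hft (le_of_lt (Set.mem_Ioi.mp ht))
    exact le_of_tendsto hslope hslope_le
  -- pass to the limit m → ∞ along S
  have hlim : Tendsto (fun m => AI (fderiv ℝ ψ (q m) v) j) atTop (𝓝 (AI v j)) := by
    have h1 : Tendsto (fun m => fderiv ℝ ψ (q m) v) atTop (𝓝 v) := by
      have happly := (ContinuousLinearMap.apply ℝ (EuclideanSpace ℝ (Fin n)) v).continuous
      have := (happly.tendsto _).comp hL
      simpa [Function.comp_def] using this
    set π : (EuclideanSpace ℝ (Fin n)) →L[ℝ] ℝ :=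
      (ContinuousLinearMap.proj j).comp (LinearMap.toContinuousLinearMap AI) with hπdef
    have hπapp : ∀ y, π y = AI y j := by intro y; simp [hπdef]
    have := (π.continuous.tendsto _).comp h1
    simp only [Function.comp_def, hπapp] at this
    exact this
  have hfreq : ∃ᶠ m in atTop, AI (fderiv ℝ ψ (q m) v) j ≤ 0 := by
    have hfr : ∃ᶠ m in atTop, m ∈ S := Nat.frequently_atTop_iff_infinite.mpr hSinf
    exact hfr.mono (fun m hm => hkey m hm)
  have hvj : AI v j ≤ 0 := by
    by_contra hpos
    push_neg at hpos
    have := (hlim.eventually_const_lt hpos).and_frequently hfreq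
    obtain ⟨m, h1, h2⟩ := this.exists
    linarith
  have : AI (q n₀) j ≥ 0 := by
    have : AI v j = -(AI (q n₀) j) := by simp [hvdef]
    linarith [hvj, this ▸ hvj]
  linarith [hqneg n₀]


theorem stmt_15 {n nI nE : ℕ}
    (AI : (EuclideanSpace ℝ (Fin n)) →ₗ[ℝ] (Fin nI → ℝ))
    (AE : (EuclideanSpace ℝ (Fin n)) →ₗ[ℝ] (Fin nE → ℝ))
    (K : Set (EuclideanSpace ℝ (Fin n)))
    (hK : K = {v | (∀ i, AI v i ≤ 0) ∧ AE v = 0})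
    (U V : Set (EuclideanSpace ℝ (Fin n))) (hUopen : IsOpen U) (hVopen : IsOpen V)
    (hU0 : (0 : EuclideanSpace ℝ (Fin n)) ∈ U) (hV0 : (0 : EuclideanSpace ℝ (Fin n)) ∈ V)
    (Φ Ψ : EuclideanSpace ℝ (Fin n) → EuclideanSpace ℝ (Fin n))
    (hΦd : ContDiffOn ℝ 1 Φ U) (hΨd : ContDiffOn ℝ 1 Ψ V)
    (hΦUV : Set.BijOn Φ U V)
    (hΨΦ : ∀ x ∈ U, Ψ (Φ x) = x) (hΦΨ : ∀ y ∈ V, Φ (Ψ y) = y)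
    (hΦ0 : Φ 0 = 0) (hΦid : fderiv ℝ Φ 0 = ContinuousLinearMap.id ℝ _)
    (hΦK : Set.BijOn Φ (K ∩ U) (K ∩ V))
    (j : Fin nI) :
    ∃ (Ut Vt : Set (EuclideanSpace ℝ (Fin n))),
      Ut ∈ 𝓝 (0 : EuclideanSpace ℝ (Fin n)) ∧ Vt ∈ 𝓝 (0 : EuclideanSpace ℝ (Fin n)) ∧
      Set.BijOn Φ ({v ∈ K | AI v j = 0} ∩ Ut) ({v ∈ K | AI v j = 0} ∩ Vt) := by
  have hΨ0 : Ψ 0 = 0 := by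
    have := hΨΦ 0 hU0
    rwa [hΦ0] at this
  have hΨK : Set.MapsTo Ψ (K ∩ V) (K ∩ U) := by
    intro y hy
    obtain ⟨x, hxKU, hfx⟩ := hΦK.surjOn hy
    have : Ψ y = x := by rw [← hfx, hΨΦ x hxKU.2]
    rw [this]
    exact hxKU
  have hΦdiff0 : DifferentiableAt ℝ Φ 0 :=
    (hΦd.contDiffAt (hUopen.mem_nhds hU0)).differentiableAt one_ne_zero
  have hΨdiff0 : DifferentiableAt ℝ Ψ 0 :=
    (hΨd.contDiffAt (hVopen.mem_nhds hV0)).differentiableAt one_ne_zero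
  have hΨid : fderiv ℝ Ψ 0 = ContinuousLinearMap.id ℝ (EuclideanSpace ℝ (Fin n)) := by
    have hΨdiff0' : DifferentiableAt ℝ Ψ (Φ 0) := by rwa [hΦ0]
    have hcomp := fderiv_comp 0 hΨdiff0' hΦdiff0
    have heq : (Ψ ∘ Φ) =ᶠ[𝓝 (0 : EuclideanSpace ℝ (Fin n))] id := by
      filter_upwards [hUopen.mem_nhds hU0] with z hz
      exact hΨΦ z hz
    have h1 : fderiv ℝ (Ψ ∘ Φ) 0 = ContinuousLinearMap.id ℝ (EuclideanSpace ℝ (Fin n)) := by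
      rw [heq.fderiv_eq, fderiv_id]
    rw [h1, hΦ0, hΦid, ContinuousLinearMap.comp_id] at hcomp
    exact hcomp.symm
  have E1 := key AI AE K hK U V hUopen hVopen hU0 hV0 Φ Ψ hΦd hΨd hΦK.mapsTo
    (hΨK.mono_right Set.inter_subset_left) hΨΦ hΦ0 hΨid j
  have E2 := key AI AE K hK V U hVopen hUopen hV0 hU0 Ψ Φ hΨd hΦd hΨK
    (hΦK.mapsTo.mono_right Set.inter_subset_left) hΦΨ hΨ0 hΦid j
  have hΦc0 : Tendsto Φ (𝓝 0) (𝓝 (0 : EuclideanSpace ℝ (Fin n))) := by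
    have := (hΦd.continuousOn.continuousAt (hUopen.mem_nhds hU0)).tendsto
    rwa [hΦ0] at this
  have hΨc0 : Tendsto Ψ (𝓝 0) (𝓝 (0 : EuclideanSpace ℝ (Fin n))) := by
    have := (hΨd.continuousOn.continuousAt (hVopen.mem_nhds hV0)).tendsto
    rwa [hΨ0] at this
  have hVt : ∀ᶠ y in 𝓝 (0 : EuclideanSpace ℝ (Fin n)),
      y ∈ V ∧ ((y ∈ K ∧ AI y j = 0 ∧ y ∈ V) → AI (Ψ y) j = 0) ∧
      (Ψ y ∈ U ∧ ((Ψ y ∈ K ∧ AI (Ψ y) j = 0 ∧ Ψ y ∈ U) → AI (Φ (Ψ y)) j = 0)) :=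
    (hVopen.eventually_mem hV0).and (E2.and (hΨc0.eventually ((hUopen.eventually_mem hU0).and E1)))
  set Vt : Set (EuclideanSpace ℝ (Fin n)) :=
    {y | y ∈ V ∧ ((y ∈ K ∧ AI y j = 0 ∧ y ∈ V) → AI (Ψ y) j = 0) ∧
      (Ψ y ∈ U ∧ ((Ψ y ∈ K ∧ AI (Ψ y) j = 0 ∧ Ψ y ∈ U) → AI (Φ (Ψ y)) j = 0))} with hVtdef
  have hVtmem : Vt ∈ 𝓝 (0 : EuclideanSpace ℝ (Fin n)) := hVt
  have hUt : ∀ᶠ x in 𝓝 (0 : EuclideanSpace ℝ (Fin n)),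
      x ∈ U ∧ ((x ∈ K ∧ AI x j = 0 ∧ x ∈ U) → AI (Φ x) j = 0) ∧ Φ x ∈ Vt :=
    (hUopen.eventually_mem hU0).and (E1.and (hΦc0.eventually hVt))
  set Ut : Set (EuclideanSpace ℝ (Fin n)) :=
    {x | x ∈ U ∧ ((x ∈ K ∧ AI x j = 0 ∧ x ∈ U) → AI (Φ x) j = 0) ∧ Φ x ∈ Vt} with hUtdef
  have hUtmem : Ut ∈ 𝓝 (0 : EuclideanSpace ℝ (Fin n)) := hUt
  refine ⟨Ut, Vt, hUtmem, hVtmem, ?_, ?_, ?_⟩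
  · rintro z ⟨⟨hzK, hzj⟩, hzU, hzP, hzV⟩
    exact ⟨⟨(hΦK.mapsTo ⟨hzK, hzU⟩).1, hzP ⟨hzK, hzj, hzU⟩⟩, hzV⟩
  · exact hΦUV.injOn.mono (fun z hz => hz.2.1)
  · rintro y ⟨⟨hyK, hyj⟩, hyV, hyP, hyU, hyQ⟩
    have hxKU : Ψ y ∈ K ∩ U := hΨK ⟨hyK, hyV⟩
    have hxj : AI (Ψ y) j = 0 := hyP ⟨hyK, hyj, hyV⟩
    have hΦx : Φ (Ψ y) = y := hΦΨ y hyV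
    refine ⟨Ψ y, ⟨⟨hxKU.1, hxj⟩, hxKU.2, ?_, ?_⟩, hΦx⟩
    · intro _
      rw [hΦx]
      exact hyj
    · rw [hΦx]
      exact ⟨hyV, hyP, hyU, hyQ⟩
end

section
/- Let f : ℝ^m → ℝ and g : ℝ^m → ℝ^n be twice continuously differentiable, K = {y : A y ≤ 0, W y = 0} a polyhedral cone, and suppose x* with g(x*) = 0 is feasible and (x*, μ) satisfies the KKT conditions: f'(x*) + μ g'(x*) = 0 and μ ∈ K°. Assume the second-order sufficient condition: L''(x*)[v,v] > 0 for all nonzero v in the critical cone C = {v : g'(x*)v ∈ K, f'(x*)v = 0}, where L(x) = f(x) + μ(g(x)). Then x* is a strict local minimizer of f subject to g(x) ∈ K. -/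
open Filter Topology Asymptotics Set

lemma tendsto_inv_smul_of_isLittleO {α F : Type*} [NormedAddCommGroup F] [NormedSpace ℝ F]
    {l : Filter α} {u : α → F} {r : α → ℝ} (h : u =o[l] r) :
    Tendsto (fun a => (r a)⁻¹ • u a) l (𝓝 0) := by
  rw [NormedAddCommGroup.tendsto_nhds_zero]
  intro ε hε
  filter_upwards [h.def (half_pos hε)] with a ha
  by_cases hra : r a = 0
  · have hu : u a = 0 := by
      have : ‖u a‖ ≤ 0 := by simpa [hra] using ha
      simpa using le_antisymm this (norm_nonneg _)
    simp [hu, hε]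
  · have hr0 : 0 < |r a| := abs_pos.2 hra
    have h1 : ‖(r a)⁻¹ • u a‖ = ‖u a‖ / |r a| := by
      rw [norm_smul, norm_inv, Real.norm_eq_abs]; ring
    rw [h1]
    have : ‖u a‖ / |r a| ≤ ε / 2 := by
      rw [div_le_iff₀ hr0]
      simpa [Real.norm_eq_abs] using ha
    linarith

lemma seg_lemma {E : Type*} [NormedAddCommGroup E] [NormedSpace ℝ E]
    (L : E → ℝ) (hL : ContDiff ℝ 2 L) (xs d : E)
    (hle : L (xs + d) ≤ L xs) (hgrad : fderiv ℝ L xs = 0) :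
    ∃ θ ∈ Ioo (0:ℝ) 1, fderiv ℝ (fderiv ℝ L) (xs + θ • d) d d ≤ 0 := by
  have hL1 : ContDiff ℝ 1 (fderiv ℝ L) := hL.fderiv_right (m := 1) (by norm_num)
  set γ : ℝ → E := fun t => xs + t • d with hγ
  have hγd : ∀ t : ℝ, HasDerivAt γ d t := fun t => by
    rw [hγ]; simpa using ((hasDerivAt_id t).smul_const d).const_add xs
  set φ : ℝ → ℝ := fun t => L (γ t) with hφ
  set φ' : ℝ → ℝ := fun t => fderiv ℝ L (γ t) d with hφ'
  have hφd : ∀ t, HasDerivAt φ (φ' t) t := fun t =>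
    ((hL.differentiable (by norm_num) (γ t)).hasFDerivAt.comp_hasDerivAt t (hγd t))
  have hφ'd : ∀ t, HasDerivAt φ' (fderiv ℝ (fderiv ℝ L) (γ t) d d) t := by
    intro t
    have h1 : HasDerivAt (fun s => fderiv ℝ L (γ s)) (fderiv ℝ (fderiv ℝ L) (γ t) d) t :=
      ((hL1.differentiable one_ne_zero (γ t)).hasFDerivAt.comp_hasDerivAt t (hγd t))
    simpa using h1.clm_apply (hasDerivAt_const t d)
  obtain ⟨ξ, hξ, hslope⟩ := exists_hasDerivAt_eq_slope φ φ' (by norm_num : (0:ℝ) < 1)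
    (fun t _ => (hφd t).continuousAt.continuousWithinAt) (fun t _ => hφd t)
  have hφ'ξ : φ' ξ ≤ 0 := by
    rw [hslope]
    have h1 : φ 1 = L (xs + d) := by simp [hφ, hγ]
    have h0 : φ 0 = L xs := by simp [hφ, hγ]
    rw [h1, h0]
    simpa using sub_nonpos.2 hle
  obtain ⟨θ, hθ, hslope2⟩ := exists_hasDerivAt_eq_slope φ'
    (fun t => fderiv ℝ (fderiv ℝ L) (γ t) d d) hξ.1
    (fun t _ => (hφ'd t).continuousAt.continuousWithinAt) (fun t _ => hφ'd t)
  refine ⟨θ, ⟨hθ.1, hθ.2.trans hξ.2⟩, ?_⟩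
  have hθγ : γ θ = xs + θ • d := rfl
  rw [← hθγ, hslope2]
  have h0 : φ' 0 = 0 := by simp [hφ', hγ, hgrad]
  rw [h0, sub_zero, sub_zero]
  exact div_nonpos_of_nonpos_of_nonneg hφ'ξ hξ.1.le

set_option maxHeartbeats 1000000 in
theorem stmt_16 {m n l k : ℕ}
    (f : EuclideanSpace ℝ (Fin m) → ℝ)
    (g : EuclideanSpace ℝ (Fin m) → EuclideanSpace ℝ (Fin n))
    (hf : ContDiff ℝ 2 f) (hg : ContDiff ℝ 2 g)
    (A : (EuclideanSpace ℝ (Fin n)) →ₗ[ℝ] (Fin l → ℝ))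
    (W : (EuclideanSpace ℝ (Fin n)) →ₗ[ℝ] (Fin (n - k) → ℝ))
    (K : Set (EuclideanSpace ℝ (Fin n)))
    (hK : K = {y | (∀ i, A y i ≤ 0) ∧ W y = 0})
    (xs : EuclideanSpace ℝ (Fin m)) (hfeas : g xs = 0)
    (μ : (EuclideanSpace ℝ (Fin n)) →L[ℝ] ℝ)
    (hKKT1 : ∀ v, fderiv ℝ f xs v + μ (fderiv ℝ g xs v) = 0)
    (hKKT2 : ∀ y ∈ K, μ y ≤ 0)
    (hSOSC : ∀ v : EuclideanSpace ℝ (Fin m), v ≠ 0 →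
      fderiv ℝ g xs v ∈ K → fderiv ℝ f xs v = 0 →
      0 < fderiv ℝ (fderiv ℝ (fun x => f x + μ (g x))) xs v v) :
    ∃ U ∈ 𝓝 xs, ∀ x ∈ U, g x ∈ K → x ≠ xs → f xs < f x := by
  by_contra hcon
  push_neg at hcon
  set L : EuclideanSpace ℝ (Fin m) → ℝ := fun x => f x + μ (g x) with hLdef
  have hLsmooth : ContDiff ℝ 2 L := hf.add (μ.contDiff.comp hg)
  -- basic derivative facts
  have hdf : ∀ x, HasFDerivAt f (fderiv ℝ f x) x :=
    fun x => (hf.differentiable (by norm_num) x).hasFDerivAt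
  have hdg : ∀ x, HasFDerivAt g (fderiv ℝ g x) x :=
    fun x => (hg.differentiable (by norm_num) x).hasFDerivAt
  have hdL : ∀ x, HasFDerivAt L (fderiv ℝ f x + μ.comp (fderiv ℝ g x)) x :=
    fun x => (hdf x).add (μ.hasFDerivAt.comp x (hdg x))
  have hL' : fderiv ℝ L xs = 0 := by
    rw [(hdL xs).fderiv]
    ext v
    simpa using hKKT1 v
  -- K is a closed cone
  have hAc : Continuous A := A.continuous_of_finiteDimensional
  have hWc : Continuous W := W.continuous_of_finiteDimensional
  have hKclosed : IsClosed K := by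
    rw [hK]
    have heq : {y : EuclideanSpace ℝ (Fin n) | (∀ i, A y i ≤ 0) ∧ W y = 0}
        = (⋂ i, {y | A y i ≤ 0}) ∩ {y | W y = 0} := by ext y; simp
    rw [heq]
    exact (isClosed_iInter fun i =>
        isClosed_le ((continuous_apply i).comp hAc) continuous_const).inter
      (isClosed_eq hWc continuous_const)
  have hKcone : ∀ (c : ℝ), 0 ≤ c → ∀ y ∈ K, c • y ∈ K := by
    intro c hc y hy
    rw [hK] at hy ⊢
    refine ⟨fun i => ?_, ?_⟩
    · have : A (c • y) i = c * A y i := by simp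
      rw [this]
      exact mul_nonpos_iff.2 (Or.inl ⟨hc, hy.1 i⟩)
    · simp [hy.2]
  -- sequence construction
  have hseq : ∀ j : ℕ, ∃ x, x ∈ Metric.ball xs (1/(j+1)) ∧ g x ∈ K ∧ x ≠ xs ∧ f x ≤ f xs := by
    intro j
    obtain ⟨x, hx, h1, h2, h3⟩ := hcon (Metric.ball xs (1/(j+1)))
      (Metric.ball_mem_nhds _ (by positivity))
    exact ⟨x, hx, h1, h2, h3⟩
  choose x hxball hxK hxne hxle using hseq
  set d : ℕ → EuclideanSpace ℝ (Fin m) := fun j => x j - xs with hd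
  set t : ℕ → ℝ := fun j => ‖d j‖ with ht
  have ht0 : ∀ j, 0 < t j := fun j => norm_pos_iff.2 (sub_ne_zero.2 (hxne j))
  set v : ℕ → EuclideanSpace ℝ (Fin m) := fun j => (t j)⁻¹ • d j with hv
  have hv1 : ∀ j, ‖v j‖ = 1 := by
    intro j
    have h1 : ‖v j‖ = ‖(‖d j‖)⁻¹‖ * ‖d j‖ := norm_smul _ _
    rw [h1, norm_inv, norm_norm, inv_mul_cancel₀ (ht0 j).ne']
  have htt : Tendsto t atTop (𝓝 0) := by
    apply squeeze_zero (fun j => (ht0 j).le) (fun j => ?_) tendsto_one_div_add_atTop_nhds_zero_nat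
    have := hxball j
    rw [Metric.mem_ball, dist_eq_norm] at this
    exact this.le
  have hxt : Tendsto x atTop (𝓝 xs) := by
    rw [tendsto_iff_dist_tendsto_zero]
    simpa [dist_eq_norm] using htt
  -- subsequence with converging directions
  obtain ⟨v0, hv0mem, ψ, hψmono, hψtend⟩ :=
    (isCompact_sphere (0 : EuclideanSpace ℝ (Fin m)) 1).tendsto_subseq
      (fun j => by simp [mem_sphere_iff_norm, hv1 j] : ∀ j, v j ∈ Metric.sphere 0 1)
  have hv0 : ‖v0‖ = 1 := by simpa [mem_sphere_iff_norm] using hv0mem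
  have hv0ne : v0 ≠ 0 := fun h => by simp [h] at hv0
  have hxψ : Tendsto (fun j => x (ψ j)) atTop (𝓝 xs) := hxt.comp hψmono.tendsto_atTop
  have htψ : Tendsto (fun j => t (ψ j)) atTop (𝓝 0) := htt.comp hψmono.tendsto_atTop
  -- g'(xs) v0 ∈ K
  set G := fderiv ℝ g xs with hG
  have hgo : (fun j => g (x (ψ j)) - g xs - G (d (ψ j))) =o[atTop] (fun j => t (ψ j)) := by
    have h1 := (hdg xs).isLittleO.comp_tendsto hxψ
    simpa [hd, ht, Function.comp_def] using h1.norm_right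
  have hwg : Tendsto (fun j => (t (ψ j))⁻¹ • (g (x (ψ j)) - g xs - G (d (ψ j)))) atTop (𝓝 0) :=
    tendsto_inv_smul_of_isLittleO hgo
  have hGv : Tendsto (fun j => G (v (ψ j))) atTop (𝓝 (G v0)) :=
    (G.continuous.tendsto v0).comp hψtend
  have hglim : Tendsto (fun j => (t (ψ j))⁻¹ • g (x (ψ j))) atTop (𝓝 (G v0)) := by
    have heq : ∀ j, (t (ψ j))⁻¹ • g (x (ψ j))
        = (t (ψ j))⁻¹ • (g (x (ψ j)) - g xs - G (d (ψ j))) + G (v (ψ j)) := by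
      intro j
      rw [hfeas, hv, map_smul]
      module
    simp only [heq]
    simpa using hwg.add hGv
  have hGv0K : G v0 ∈ K := by
    refine hKclosed.mem_of_tendsto hglim (Eventually.of_forall fun j => ?_)
    exact hKcone _ (inv_nonneg.2 (ht0 (ψ j)).le) _ (hxK (ψ j))
  -- f'(xs) v0 = 0
  set F0 := fderiv ℝ f xs with hF0
  have hfo : (fun j => f (x (ψ j)) - f xs - F0 (d (ψ j))) =o[atTop] (fun j => t (ψ j)) := by
    have h1 := (hdf xs).isLittleO.comp_tendsto hxψ
    simpa [hd, ht, Function.comp_def] using h1.norm_right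
  have hwf : Tendsto (fun j => (t (ψ j))⁻¹ • (f (x (ψ j)) - f xs - F0 (d (ψ j)))) atTop (𝓝 0) :=
    tendsto_inv_smul_of_isLittleO hfo
  have hF0v : Tendsto (fun j => F0 (v (ψ j))) atTop (𝓝 (F0 v0)) :=
    (F0.continuous.tendsto v0).comp hψtend
  have hF0le : F0 v0 ≤ 0 := by
    have hle : ∀ j, F0 (v (ψ j)) ≤ -((t (ψ j))⁻¹ • (f (x (ψ j)) - f xs - F0 (d (ψ j)))) := by
      intro j
      have h1 : F0 (v (ψ j)) = (t (ψ j))⁻¹ * (f (x (ψ j)) - f xs)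
          - (t (ψ j))⁻¹ • (f (x (ψ j)) - f xs - F0 (d (ψ j))) := by
        rw [hv, map_smul]
        simp [smul_eq_mul]
        ring
      rw [h1]
      have h2 : (t (ψ j))⁻¹ * (f (x (ψ j)) - f xs) ≤ 0 :=
        mul_nonpos_iff.2 (Or.inl ⟨(inv_nonneg.2 (ht0 (ψ j)).le), sub_nonpos.2 (hxle (ψ j))⟩)
      linarith
    have := le_of_tendsto_of_tendsto' hF0v (by simpa using hwf.neg) hle
    simpa using this
  have hF0ge : 0 ≤ F0 v0 := by
    have h1 := hKKT1 v0
    have h2 := hKKT2 _ hGv0K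
    linarith
  have hF0v0 : F0 v0 = 0 := le_antisymm hF0le hF0ge
  -- SOSC gives positivity
  have hpos : 0 < fderiv ℝ (fderiv ℝ L) xs v0 v0 := hSOSC v0 hv0ne hGv0K hF0v0
  -- second derivative nonpositive along the sequence
  have hLle : ∀ j, L (xs + d j) ≤ L xs := by
    intro j
    have h1 : xs + d j = x j := by rw [hd]; module
    rw [h1]
    have h2 : μ (g (x j)) ≤ 0 := hKKT2 _ (hxK j)
    have h3 : L (x j) = f (x j) + μ (g (x j)) := rfl
    have h4 : L xs = f xs := by simp [hLdef, hfeas]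
    rw [h3, h4]
    linarith [hxle j]
  choose θ hθmem hθle using fun j => seg_lemma L hLsmooth xs (d j) (hLle j) hL'
  set FF := fderiv ℝ (fderiv ℝ L) with hFF
  have hvFF : ∀ j, FF (xs + θ j • d j) (v j) (v j) ≤ 0 := by
    intro j
    have hc : (0:ℝ) ≤ (t j)⁻¹ := inv_nonneg.2 (ht0 j).le
    have h1 : FF (xs + θ j • d j) (v j) (v j)
        = (t j)⁻¹ * ((t j)⁻¹ * FF (xs + θ j • d j) (d j) (d j)) := by
      have hvj : v j = (t j)⁻¹ • d j := rfl
      rw [hvj]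
      simp only [map_smul, ContinuousLinearMap.smul_apply, smul_eq_mul]
    rw [h1]
    exact mul_nonpos_iff.2 (Or.inl ⟨hc, mul_nonpos_iff.2 (Or.inl ⟨hc, hθle j⟩)⟩)
  clear_value FF v d t L
  -- limits
  have hyt : Tendsto (fun j => xs + θ j • d j) atTop (𝓝 xs) := by
    have h1 : Tendsto (fun j => θ j • d j) atTop (𝓝 0) := by
      apply squeeze_zero_norm (fun j => ?_) htt
      rw [norm_smul]
      have hθ1 : |θ j| ≤ 1 := le_of_lt (abs_lt.2 ⟨by linarith [(hθmem j).1], (hθmem j).2⟩)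
      calc ‖θ j‖ * ‖d j‖ ≤ 1 * ‖d j‖ := by
            apply mul_le_mul_of_nonneg_right _ (norm_nonneg _)
            simpa [Real.norm_eq_abs] using hθ1
        _ = t j := by rw [one_mul, ht]
    simpa using (tendsto_const_nhds (x := xs)).add h1
  have hL1 : ContDiff ℝ 1 (fderiv ℝ L) := hLsmooth.fderiv_right (m := 1) (by norm_num)
  have hFFc : Continuous FF := by rw [hFF]; exact hL1.continuous_fderiv one_ne_zero
  have hH : Continuous (fun p : EuclideanSpace ℝ (Fin m) × EuclideanSpace ℝ (Fin m) =>
      FF p.1 p.2 p.2) :=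
    by fun_prop
  have hyψ : Tendsto (fun j => xs + θ (ψ j) • d (ψ j)) atTop (𝓝 xs) :=
    hyt.comp hψmono.tendsto_atTop
  have hpair : Tendsto (fun j => ((xs + θ (ψ j) • d (ψ j)), v (ψ j))) atTop (𝓝 (xs, v0)) :=
    hyψ.prodMk_nhds hψtend
  have hfinal : FF xs v0 v0 ≤ 0 := by
    have h1' : Tendsto ((fun p : EuclideanSpace ℝ (Fin m) × EuclideanSpace ℝ (Fin m) =>
        FF p.1 p.2 p.2) ∘ (fun j => ((xs + θ (ψ j) • d (ψ j)), v (ψ j)))) atTop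
        (𝓝 (FF xs v0 v0)) := (hH.tendsto (xs, v0)).comp hpair
    have h1 : Tendsto (fun j => FF (xs + θ (ψ j) • d (ψ j)) (v (ψ j)) (v (ψ j))) atTop
        (𝓝 (FF xs v0 v0)) := by simpa [Function.comp_def] using h1'
    exact le_of_tendsto h1 (Eventually.of_forall fun j => hvFF (ψ j))
  linarith
end
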